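/- arXiv:1010.3781 — 2 statements merged into one kernel-verified Lean document; each statement's English description precedes it below -/
import Mathlib

section
/- Let p be an odd prime, a ≥ 2, and δ a quadratic non-residue modulo p. Work in the ring R = (ℤ/p^aℤ)[√δ] (i.e., (ℤ/p^aℤ)[x]/(x²-δ)), with trace Tr(u + v√δ) = 2u. An element α ∈ R^× satisfies: p^{a-1} divides Tr(α) but p^a does not divide Tr(α), if and only if α = r(p^{a-1}·c + β√δ) for some unit r ∈ (ℤ/p^aℤ)^×, some β ∈ (ℤ/p^aℤ)^× and some c ∈ (ℤ/p^aℤ)^× — equivalently, if and only if α is a unit multiple (by (ℤ/p^aℤ)^×) of an element of the form p^{a-1} + β√δ with β a unit. -/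
open Polynomial

set_option linter.unusedSectionVars false
set_option maxHeartbeats 1000000

section aux
variable {K : Type*} [CommRing K] [Nontrivial K]

lemma monic_aux (d : K) : (X ^ 2 - C d).Monic := monic_X_pow_sub_C d two_ne_zero

lemma root_sq (d : K) : (AdjoinRoot.root (X ^ 2 - C d)) ^ 2 = algebraMap K _ d := by
  have h : (AdjoinRoot.mk (X ^ 2 - C d)) (X ^ 2 - C d) = 0 := AdjoinRoot.mk_self
  rw [map_sub, map_pow, AdjoinRoot.mk_X, AdjoinRoot.mk_C, sub_eq_zero] at h
  rw [h, AdjoinRoot.algebraMap_eq]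

noncomputable def bas (d : K) : Module.Basis (Fin 2) K (AdjoinRoot (X ^ 2 - C d)) :=
  ((AdjoinRoot.powerBasis' (monic_aux d)).basis).reindex
    (finCongr (natDegree_X_pow_sub_C))

lemma bas_apply (d : K) (i : Fin 2) :
    bas d i = AdjoinRoot.root (X ^ 2 - C d) ^ (i : ℕ) := by
  rw [bas, Module.Basis.reindex_apply, PowerBasis.basis_eq_pow]
  rfl

lemma decomp (d : K) (z : AdjoinRoot (X ^ 2 - C d)) :
    ∃ u v : K, z = algebraMap K _ u + algebraMap K _ v * AdjoinRoot.root _ := by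
  classical
  have h := (bas d).sum_repr z
  refine ⟨(bas d).repr z 0, (bas d).repr z 1, ?_⟩
  conv_lhs => rw [← h]
  rw [Fin.sum_univ_two, bas_apply, bas_apply]
  simp only [Fin.val_zero, pow_zero, Fin.val_one, pow_one, Algebra.smul_def, mul_one]

lemma repr_comb (d u v : K) :
    ((bas d).repr (algebraMap K _ u + algebraMap K _ v * AdjoinRoot.root _)) =
      Finsupp.single 0 u + Finsupp.single 1 v := by
  have h : (algebraMap K (AdjoinRoot (X ^ 2 - C d)) u + algebraMap K _ v * AdjoinRoot.root _)
      = u • bas d 0 + v • bas d 1 := by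
    rw [bas_apply, bas_apply]
    simp [Algebra.smul_def, mul_comm]
  rw [h, map_add, map_smul, map_smul, Module.Basis.repr_self, Module.Basis.repr_self]
  ext i
  simp [Finsupp.single_apply]

lemma comb_inj (d u v u' v' : K)
    (h : algebraMap K (AdjoinRoot (X ^ 2 - C d)) u + algebraMap K _ v * AdjoinRoot.root _ =
      algebraMap K _ u' + algebraMap K _ v' * AdjoinRoot.root _) : u = u' ∧ v = v' := by
  have h2 := congrArg ((bas d).repr) h
  rw [repr_comb, repr_comb] at h2
  constructor
  · have := DFunLike.congr_fun h2 0
    simpa using this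
  · have := DFunLike.congr_fun h2 1
    simpa using this

lemma trace_comb (d u v : K) :
    Algebra.trace K (AdjoinRoot (X ^ 2 - C d))
      (algebraMap K _ u + algebraMap K _ v * AdjoinRoot.root _) = 2 * u := by
  classical
  set z := algebraMap K (AdjoinRoot (X ^ 2 - C d)) u + algebraMap K _ v * AdjoinRoot.root _ with hz
  rw [Algebra.trace_eq_matrix_trace (bas d), Matrix.trace, Fin.sum_univ_two]
  have h0 : z * bas d 0 = z := by rw [bas_apply]; simp
  have h1 : z * bas d 1 = algebraMap K _ (v * d) + algebraMap K _ u * AdjoinRoot.root _ := by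
    rw [bas_apply]
    simp only [Fin.val_one, pow_one, hz]
    rw [add_mul, mul_assoc, ← sq, root_sq, ← map_mul, add_comm]
  rw [Matrix.diag_apply, Matrix.diag_apply, Algebra.leftMulMatrix_eq_repr_mul,
    Algebra.leftMulMatrix_eq_repr_mul, h0, h1, hz, repr_comb, repr_comb]
  simp
  ring
end aux

open Polynomial in
/-- In `R = (ℤ/p^aℤ)[√δ]` (`p` odd prime, `a ≥ 2`, `δ` a non-residue mod `p`),
a unit `α` has trace exactly divisible by `p^{a-1}` if and only if `α` is a
`(ℤ/p^aℤ)ˣ`-multiple of an element `p^{a-1} + β√δ` with `β` a unit. -/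
theorem stmt_6 (p a : ℕ) [NeZero (p ^ a)] (hp : p.Prime) (hp2 : p ≠ 2)
    (ha : 2 ≤ a) (δ : ℤ) (hδ : ¬ IsSquare ((δ : ZMod p)))
    (α : (AdjoinRoot (X ^ 2 - C ((δ : ZMod (p ^ a))) : (ZMod (p ^ a))[X]))ˣ) :
    ((p : ZMod (p ^ a)) ^ (a - 1) ∣
        Algebra.trace (ZMod (p ^ a)) _ (α : AdjoinRoot (X ^ 2 - C ((δ : ZMod (p ^ a)))))
      ∧ ¬ (p : ZMod (p ^ a)) ^ a ∣
        Algebra.trace (ZMod (p ^ a)) _ (α : AdjoinRoot (X ^ 2 - C ((δ : ZMod (p ^ a)))))) ↔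
    (∃ r β : (ZMod (p ^ a))ˣ,
      (α : AdjoinRoot (X ^ 2 - C ((δ : ZMod (p ^ a))))) =
        algebraMap _ _ (r : ZMod (p ^ a)) *
          ((p : AdjoinRoot (X ^ 2 - C ((δ : ZMod (p ^ a))))) ^ (a - 1) +
            algebraMap _ _ (β : ZMod (p ^ a)) * AdjoinRoot.root _)) := by
  haveI : Fact p.Prime := ⟨hp⟩
  have ha0 : a ≠ 0 := by omega
  haveI : Fact (1 < p ^ a) := ⟨Nat.one_lt_pow ha0 hp.one_lt⟩
  have hpa : (p : ZMod (p ^ a)) ^ a = 0 := by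
    rw [← Nat.cast_pow]; exact ZMod.natCast_self _
  have hpa1 : (p : ZMod (p ^ a)) ^ (a - 1) ≠ 0 := by
    rw [← Nat.cast_pow, Ne, ZMod.natCast_eq_zero_iff]
    intro h
    have h1 := Nat.le_of_dvd (pow_pos hp.pos _) h
    have h2 := Nat.pow_lt_pow_right hp.one_lt (show a - 1 < a by omega)
    omega
  have hunit : ∀ c : ZMod (p ^ a), ¬ IsUnit c → ∃ m : ZMod (p ^ a), c = (p : ZMod (p ^ a)) * m := by
    intro c hc
    rw [← ZMod.natCast_zmod_val c] at hc
    rw [ZMod.isUnit_iff_coprime, Nat.coprime_pow_right_iff (by omega),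
      Nat.coprime_comm, Nat.Prime.coprime_iff_not_dvd hp, not_not] at hc
    obtain ⟨m, hm⟩ := hc
    refine ⟨(m : ZMod (p ^ a)), ?_⟩
    rw [← ZMod.natCast_zmod_val c, hm]
    push_cast
    ring
  have h2u : IsUnit (2 : ZMod (p ^ a)) := by
    have h22 : ((2 : ℕ) : ZMod (p ^ a)) = 2 := by norm_cast
    rw [← h22, ZMod.isUnit_iff_coprime]
    exact Nat.Coprime.pow_right _ ((Nat.coprime_primes Nat.prime_two hp).mpr (Ne.symm hp2))
  have hmapp : (p : AdjoinRoot (X ^ 2 - C ((δ : ZMod (p ^ a))))) = algebraMap (ZMod (p ^ a)) _ (p : ZMod (p ^ a)) := (map_natCast _ p).symm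
  obtain ⟨u, v, hz⟩ := decomp ((δ : ZMod (p ^ a))) (α : AdjoinRoot (X ^ 2 - C ((δ : ZMod (p ^ a)))))
  rw [hz, trace_comb]
  constructor
  · rintro ⟨hdvd, hne⟩
    rw [hpa, zero_dvd_iff] at hne
    have hu_ne : u ≠ 0 := fun h => hne (by rw [h, mul_zero])
    have hu_dvd : (p : ZMod (p ^ a)) ^ (a - 1) ∣ u := by
      have h3 := hdvd.mul_left (((h2u.unit⁻¹ : (ZMod (p ^ a))ˣ)) : ZMod (p ^ a))
      have hcancel : ((h2u.unit⁻¹ : (ZMod (p ^ a))ˣ) : ZMod (p ^ a)) * 2 = 1 := h2u.val_inv_mul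
      have h4 : ((h2u.unit⁻¹ : (ZMod (p ^ a))ˣ) : ZMod (p ^ a)) * (2 * u) = u := by
        rw [← mul_assoc, hcancel, one_mul]
      rwa [h4] at h3
    obtain ⟨c, hc⟩ := hu_dvd
    have hcu : IsUnit c := by
      by_contra hcu
      obtain ⟨m, hm⟩ := hunit c hcu
      apply hu_ne
      rw [hc, hm, ← mul_assoc, ← pow_succ, show a - 1 + 1 = a by omega, hpa, zero_mul]
    -- reduction mod p
    set i : (ZMod (p ^ a)) →+* ZMod p := ZMod.castHom (dvd_pow_self p ha0) (ZMod p) with hi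
    have hd0 : Polynomial.eval₂
        ((algebraMap (ZMod p) (AdjoinRoot (X ^ 2 - C ((δ : ℤ) : ZMod p)))).comp i)
        (AdjoinRoot.root _) (X ^ 2 - C ((δ : ZMod (p ^ a)))) = 0 := by
      rw [eval₂_sub, eval₂_pow, eval₂_X, eval₂_C, root_sq, sub_eq_zero, RingHom.comp_apply,
        map_intCast i δ]
    set φ := AdjoinRoot.lift _ _ hd0 with hφ
    haveI : Nontrivial (AdjoinRoot (X ^ 2 - C ((δ : ℤ) : ZMod p))) := by
      refine AdjoinRoot.nontrivial _ ?_
      rw [degree_X_pow_sub_C (by norm_num)]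
      norm_num
    have hvu : IsUnit v := by
      by_contra hvu
      obtain ⟨m, hm⟩ := hunit v hvu
      have hiz : ∀ x : ZMod (p ^ a), ((p : ZMod (p ^ a)) ∣ x) → φ (algebraMap (ZMod (p ^ a)) _ x) = 0 := by
        rintro x ⟨m', rfl⟩
        rw [AdjoinRoot.algebraMap_eq, hφ, AdjoinRoot.lift_of, map_mul, RingHom.comp_apply,
          map_natCast i p, ZMod.natCast_self, map_zero, zero_mul]
      have hφα : φ (α : AdjoinRoot (X ^ 2 - C ((δ : ZMod (p ^ a))))) = 0 := by
        rw [hz, map_add, map_mul, hiz u ⟨(p : ZMod (p ^ a)) ^ (a - 2) * c, by rw [hc, ← mul_assoc, ← pow_succ']; congr 2; omega⟩,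
          hiz v ⟨m, hm⟩, zero_mul, zero_add]
      have := (α.isUnit.map φ)
      rw [hφα] at this
      exact not_isUnit_zero this
    refine ⟨hcu.unit, hcu.unit⁻¹ * hvu.unit, ?_⟩
    rw [hc, hmapp, ← map_pow, Units.val_mul, mul_add, ← map_mul, ← mul_assoc, ← map_mul]
    congr 2
    · rw [hcu.unit_spec, mul_comm]
    · rw [← mul_assoc, Units.mul_inv, one_mul, hvu.unit_spec]
  · rintro ⟨r, β, heq⟩
    rw [hmapp, ← map_pow, mul_add, ← map_mul, ← mul_assoc, ← map_mul] at heq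
    obtain ⟨hu, hv⟩ := comb_inj ((δ : ZMod (p ^ a))) u v _ _ heq
    constructor
    · exact ⟨2 * (r : ZMod (p ^ a)), by rw [hu]; ring⟩
    · rw [hpa, zero_dvd_iff, hu]
      intro h0
      have hru : IsUnit ((2 : ZMod (p ^ a)) * (r : ZMod (p ^ a))) := h2u.mul r.isUnit
      have : ((hru.unit⁻¹ : (ZMod (p ^ a))ˣ) : ZMod (p ^ a)) * (2 * ((r : ZMod (p ^ a)) * (p : ZMod (p ^ a)) ^ (a - 1))) = (p : ZMod (p ^ a)) ^ (a - 1) := by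
        rw [show (2 : ZMod (p ^ a)) * ((r : ZMod (p ^ a)) * (p : ZMod (p ^ a)) ^ (a - 1)) =
          (2 * (r : ZMod (p ^ a))) * (p : ZMod (p ^ a)) ^ (a - 1) from by ring,
          ← mul_assoc, hru.val_inv_mul, one_mul]
      rw [h0, mul_zero] at this
      exact hpa1 this.symm
end

section
/- Let p be an odd prime. Up to isomorphism, there are exactly three quadratic field extensions of ℚ_p, namely ℚ_p(√u), ℚ_p(√p), and ℚ_p(√(up)) where u is any unit of ℤ_p that is not a square; equivalently, ℚ_p^×/(ℚ_p^×)² has order 4. -/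
open Padic PadicInt Polynomial

variable (p : ℕ) [Fact p.Prime]

lemma aux_norm (x : ℚ_[p]ˣ) :
    ‖(x : ℚ_[p]) * (p : ℚ_[p]) ^ (-(x : ℚ_[p]).valuation)‖ = 1 := by
  have hx : (x : ℚ_[p]) ≠ 0 := Units.ne_zero x
  have hp : (p : ℝ) ≠ 0 := by
    exact_mod_cast (Fact.out : p.Prime).ne_zero
  rw [_root_.norm_mul, Padic.norm_p_zpow, Padic.norm_eq_zpow_neg_valuation hx, ← zpow_add₀ hp,
    neg_neg, neg_add_cancel, zpow_zero]

/-- the unit part of a unit of `ℚ_p`, as a unit of `ℤ_p`. -/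
noncomputable def unitPart : ℚ_[p]ˣ →* ℤ_[p]ˣ where
  toFun x := PadicInt.mkUnits (aux_norm p x)
  map_one' := by
    apply Units.ext
    apply Subtype.ext
    show ((1 : ℚ_[p]) * _ : ℚ_[p]) = _
    simp [Padic.valuation_one]
  map_mul' x y := by
    apply Units.ext
    apply Subtype.ext
    show ((((x * y : ℚ_[p]ˣ)) : ℚ_[p]) * _ : ℚ_[p]) = _
    have hx : (x : ℚ_[p]) ≠ 0 := Units.ne_zero x
    have hy : (y : ℚ_[p]) ≠ 0 := Units.ne_zero y
    have hp : (p : ℚ_[p]) ≠ 0 := by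
      exact_mod_cast (Fact.out : p.Prime).ne_zero
    push_cast
    rw [Padic.valuation_mul hx hy, neg_add, zpow_add₀ hp,
      PadicInt.mkUnits_eq, PadicInt.mkUnits_eq]
    ring

lemma two_unit (hp2 : p ≠ 2) : IsUnit (2 : ℤ_[p]) := by
  have hdvd : ¬ (p : ℤ_[p]) ∣ 2 := by
    intro h
    have : (p : ℤ) ∣ 2 := by
      have := (PadicInt.pow_p_dvd_int_iff (p := p) 1 2).mp (by simpa using h)
      simpa using this
    have hple : p = 2 :=
      (Nat.prime_dvd_prime_iff_eq (Fact.out : p.Prime) Nat.prime_two).mp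
        (by exact_mod_cast Int.ofNat_dvd.mp (by exact_mod_cast this))
    exact hp2 hple
  rw [PadicInt.isUnit_iff]
  by_contra h
  exact hdvd ((PadicInt.norm_lt_one_iff_dvd _).mp
    (lt_of_le_of_ne (PadicInt.norm_le_one _) h))

lemma isUnit_of_toZMod_ne_zero {x : ℤ_[p]} (h : PadicInt.toZMod x ≠ 0) : IsUnit x := by
  by_contra hu
  apply h
  have hx : x ∈ IsLocalRing.maximalIdeal ℤ_[p] := hu
  rw [← PadicInt.ker_toZMod] at hx
  exact hx

lemma exists_sq_of_residue (hp2 : p ≠ 2) (u : ℤ_[p]ˣ)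
    (h : IsSquare (PadicInt.toZMod (u : ℤ_[p]))) : ∃ z : ℤ_[p]ˣ, z ^ 2 = u := by
  obtain ⟨r, hr⟩ := h
  have hu0 : PadicInt.toZMod (u : ℤ_[p]) ≠ 0 := by
    have : IsUnit (PadicInt.toZMod (u : ℤ_[p])) := (u.isUnit).map PadicInt.toZMod
    exact this.ne_zero
  have hr0 : r ≠ 0 := by
    rintro rfl; simp [hr] at hu0
  set a : ℤ_[p] := ((r.val : ℕ) : ℤ_[p]) with ha
  have hta : PadicInt.toZMod a = r := by
    rw [ha, map_natCast, ZMod.natCast_val, ZMod.cast_id]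
  have hanorm : ‖a‖ = 1 := by
    rw [← PadicInt.isUnit_iff]
    exact isUnit_of_toZMod_ne_zero p (by rw [hta]; exact hr0)
  set F : Polynomial ℤ_[p] := X ^ 2 - C (u : ℤ_[p]) with hF
  have hevala : F.eval a = a ^ 2 - u := by simp [hF]
  have hderiv : F.derivative.eval a = 2 * a := by
    simp [hF]
    left; norm_num
  have hlt : ‖F.eval a‖ < 1 := by
    rw [hevala]
    have hmem : (a ^ 2 - u : ℤ_[p]) ∈ IsLocalRing.maximalIdeal ℤ_[p] := by
      rw [← PadicInt.ker_toZMod, RingHom.mem_ker, map_sub, map_pow, hta, hr, sq]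
      ring
    have h2 := (IsLocalRing.mem_maximalIdeal _).mp hmem
    rwa [mem_nonunits] at h2
  have hnorm : ‖F.eval a‖ < ‖F.derivative.eval a‖ ^ 2 := by
    rw [hderiv, norm_mul, hanorm, PadicInt.isUnit_iff.mp (two_unit p hp2)]
    simpa using hlt
  obtain ⟨z, hz, -, -, -⟩ := hensels_lemma hnorm
  have hz2 : z ^ 2 = (u : ℤ_[p]) := by
    have hzz : F.eval z = z ^ 2 - u := by simp [hF]
    rw [Polynomial.coe_aeval_eq_eval, hzz] at hz
    exact sub_eq_zero.mp hz
  have hzu : IsUnit z := by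
    rw [PadicInt.isUnit_iff]
    have h1 : ‖z‖ ^ 2 = 1 := by
      rw [← norm_pow, hz2]
      exact PadicInt.norm_units u
    nlinarith [norm_nonneg (z : ℤ_[p])]
  refine ⟨hzu.unit, Units.ext ?_⟩
  simpa [hzu.unit_spec] using hz2

noncomputable def v2hom : ℚ_[p]ˣ →* Multiplicative (ZMod 2) where
  toFun x := Multiplicative.ofAdd (((x : ℚ_[p]).valuation : ZMod 2))
  map_one' := by
    simp [Padic.valuation_one]
  map_mul' x y := by
    have h := Padic.valuation_mul (Units.ne_zero x) (Units.ne_zero y)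
    show Multiplicative.ofAdd (((((x : ℚ_[p]) * y)).valuation : ZMod 2)) = _
    rw [h]
    push_cast
    rfl

noncomputable def chiHom : ℚ_[p]ˣ →* ℤˣ :=
  ((quadraticChar (ZMod p)).toUnitHom).comp
    ((Units.map (PadicInt.toZMod (p := p)).toMonoidHom).comp (unitPart p))

noncomputable def fHom : ℚ_[p]ˣ →* Multiplicative (ZMod 2) × ℤˣ :=
  (v2hom p).prod (chiHom p)

lemma unitPart_coe (x : ℚ_[p]ˣ) :
    ((unitPart p x : ℤ_[p]) : ℚ_[p]) = (x : ℚ_[p]) * (p : ℚ_[p]) ^ (-(x : ℚ_[p]).valuation) :=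
  rfl

lemma chiHom_coe (x : ℚ_[p]ˣ) :
    ((chiHom p x : ℤˣ) : ℤ) = quadraticChar (ZMod p) (PadicInt.toZMod (unitPart p x : ℤ_[p])) := by
  simp [chiHom, MulChar.coe_toUnitHom]

lemma residue_unitPart_ne_zero (x : ℚ_[p]ˣ) :
    PadicInt.toZMod ((unitPart p x : ℤ_[p])) ≠ 0 :=
  (((unitPart p x).isUnit).map PadicInt.toZMod).ne_zero

lemma p_ne_zero' : (p : ℚ_[p]) ≠ 0 := by
  exact_mod_cast (Fact.out : p.Prime).ne_zero

/-- `p` as a unit of `ℚ_p`. -/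
noncomputable def pUnit : ℚ_[p]ˣ := Units.mk0 (p : ℚ_[p]) (p_ne_zero' p)

lemma unitPart_pUnit : unitPart p (pUnit p) = 1 := by
  apply Units.ext
  apply Subtype.ext
  show ((p : ℚ_[p]) * _ : ℚ_[p]) = _
  rw [show ((pUnit p : ℚ_[p])).valuation = 1 from Padic.valuation_p]
  simp [p_ne_zero' p]

lemma fHom_pUnit : fHom p (pUnit p) = (Multiplicative.ofAdd (1 : ZMod 2), 1) := by
  have h1 : v2hom p (pUnit p) = Multiplicative.ofAdd (1 : ZMod 2) := by
    show Multiplicative.ofAdd (((pUnit p : ℚ_[p]).valuation : ZMod 2)) = _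
    rw [show ((pUnit p : ℚ_[p])).valuation = 1 from Padic.valuation_p]
    norm_num
  have h2 : chiHom p (pUnit p) = 1 := by
    unfold chiHom
    rw [MonoidHom.comp_apply, MonoidHom.comp_apply, unitPart_pUnit]
    simp
  show (v2hom p (pUnit p), chiHom p (pUnit p)) = _
  rw [h1, h2]

lemma cval_ne_zero {c : ZMod p} (hc : c ≠ 0) : ((c.val : ℕ) : ℚ_[p]) ≠ 0 := by
  haveI : NeZero p := ⟨(Fact.out : p.Prime).ne_zero⟩
  exact_mod_cast fun h => hc ((ZMod.val_eq_zero c).mp h)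

/-- a lift of `c : ZMod p` to a unit of `ℚ_p`. -/
noncomputable def cUnit {c : ZMod p} (hc : c ≠ 0) : ℚ_[p]ˣ :=
  Units.mk0 ((c.val : ℕ) : ℚ_[p]) (cval_ne_zero p hc)

lemma cUnit_val_valuation {c : ZMod p} (hc : c ≠ 0) :
    ((cUnit p hc : ℚ_[p])).valuation = 0 := by
  haveI : NeZero p := ⟨(Fact.out : p.Prime).ne_zero⟩
  show ((((c.val : ℕ) : ℚ_[p]))).valuation = 0
  rw [Padic.valuation_natCast]
  norm_cast
  apply padicValNat.eq_zero_of_not_dvd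
  exact Nat.not_dvd_of_pos_of_lt
    (Nat.pos_of_ne_zero fun h => hc ((ZMod.val_eq_zero c).mp h)) (ZMod.val_lt c)

lemma toZMod_unitPart_cUnit {c : ZMod p} (hc : c ≠ 0) :
    PadicInt.toZMod ((unitPart p (cUnit p hc) : ℤ_[p])) = c := by
  have h1 : ((unitPart p (cUnit p hc) : ℤ_[p]) : ℚ_[p]) = (((c.val : ℕ) : ℤ_[p]) : ℚ_[p]) := by
    rw [unitPart_coe, cUnit_val_valuation p hc]
    push_cast
    show ((c.val : ℕ) : ℚ_[p]) * _ = _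
    simp
  have h2 : (unitPart p (cUnit p hc) : ℤ_[p]) = ((c.val : ℕ) : ℤ_[p]) :=
    Subtype.coe_injective h1
  rw [h2, map_natCast, ZMod.natCast_val, ZMod.cast_id]

lemma fHom_cUnit {c : ZMod p} (hc : c ≠ 0) (hqc : quadraticChar (ZMod p) c = -1) :
    fHom p (cUnit p hc) = (1, -1) := by
  have h1 : v2hom p (cUnit p hc) = 1 := by
    show Multiplicative.ofAdd (((cUnit p hc : ℚ_[p]).valuation : ZMod 2)) = _
    rw [cUnit_val_valuation p hc]
    norm_num
  have h2 : chiHom p (cUnit p hc) = -1 := by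
    apply Units.ext
    rw [chiHom_coe, toZMod_unitPart_cUnit p hc, hqc]
    rfl
  show (v2hom p (cUnit p hc), chiHom p (cUnit p hc)) = _
  rw [h1, h2]

lemma fHom_ker (hp2 : p ≠ 2) :
    (fHom p).ker = (powMonoidHom 2 : ℚ_[p]ˣ →* ℚ_[p]ˣ).range := by
  ext x
  rw [MonoidHom.mem_ker, MonoidHom.mem_range]
  constructor
  · intro hx
    have h1 : (((x : ℚ_[p]).valuation : ZMod 2)) = 0 := by
      have := congrArg Prod.fst hx
      simpa [fHom, v2hom] using this
    have h2 : ((chiHom p x : ℤˣ) : ℤ) = 1 := by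
      have h := congrArg Prod.snd hx
      simp only [fHom, MonoidHom.prod_apply] at h
      rw [h]
      rfl
    obtain ⟨k, hk⟩ : (2 : ℤ) ∣ (x : ℚ_[p]).valuation := by
      have := (ZMod.intCast_zmod_eq_zero_iff_dvd _ 2).mp h1
      exact_mod_cast this
    rw [chiHom_coe] at h2
    have hsq : IsSquare (PadicInt.toZMod ((unitPart p x : ℤ_[p]))) :=
      (quadraticChar_one_iff_isSquare (residue_unitPart_ne_zero p x)).mp h2
    obtain ⟨z, hz⟩ := exists_sq_of_residue p hp2 (unitPart p x) hsq
    have hz0 : ((z : ℤ_[p]) : ℚ_[p]) ≠ 0 := by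
      intro h
      have : ((z : ℤ_[p])) = 0 := Subtype.coe_injective h
      have hn := PadicInt.norm_units z
      rw [this] at hn
      simp at hn
    refine ⟨Units.mk0 (((z : ℤ_[p]) : ℚ_[p]) * (p : ℚ_[p]) ^ k)
      (mul_ne_zero hz0 (zpow_ne_zero k (p_ne_zero' p))), Units.ext ?_⟩
    show (((z : ℤ_[p]) : ℚ_[p]) * (p : ℚ_[p]) ^ k) ^ 2 = (x : ℚ_[p])
    have hz2 : (((z : ℤ_[p]) : ℚ_[p])) ^ 2 = ((unitPart p x : ℤ_[p]) : ℚ_[p]) := by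
      rw [← hz]
      push_cast
      ring
    rw [mul_pow, hz2, unitPart_coe, ← zpow_natCast ((p : ℚ_[p]) ^ k), ← zpow_mul,
      mul_assoc, ← zpow_add₀ (p_ne_zero' p)]
    rw [show k * (2 : ℕ) = (x : ℚ_[p]).valuation by omega]
    simp
  · rintro ⟨y, rfl⟩
    have hsq1 : ∀ t : Multiplicative (ZMod 2) × ℤˣ, t ^ 2 = 1 := by decide
    rw [powMonoidHom_apply, map_pow, hsq1]

/-- For an odd prime `p`, the square-class group `ℚ_p^×/(ℚ_p^×)²` has order 4
(equivalently, `ℚ_p` has exactly three quadratic extensions up to isomorphism). -/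
theorem stmt_8 (p : ℕ) [Fact p.Prime] (hp2 : p ≠ 2) :
    Nat.card (ℚ_[p]ˣ ⧸ (powMonoidHom 2 : ℚ_[p]ˣ →* ℚ_[p]ˣ).range) = 4 := by
  have hsurj : Function.Surjective (fHom p) := by
    have hchar : ringChar (ZMod p) ≠ 2 := by
      rw [ZMod.ringChar_zmod_n]; exact hp2
    obtain ⟨c, hqc⟩ := quadraticChar_exists_neg_one hchar
    have hc : c ≠ 0 := by
      intro h
      rw [h] at hqc
      simp at hqc
    rintro ⟨a, b⟩
    have ha : a = 1 ∨ a = Multiplicative.ofAdd (1 : ZMod 2) :=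
      (by decide : ∀ a : Multiplicative (ZMod 2), a = 1 ∨ a = Multiplicative.ofAdd 1) a
    have hb := Int.units_eq_one_or b
    rcases ha with rfl | rfl <;> rcases hb with rfl | rfl
    · exact ⟨1, by simp; rfl⟩
    · exact ⟨cUnit p hc, fHom_cUnit p hc hqc⟩
    · exact ⟨pUnit p, fHom_pUnit p⟩
    · refine ⟨pUnit p * cUnit p hc, ?_⟩
      rw [map_mul, fHom_pUnit, fHom_cUnit p hc hqc]
      rfl
  rw [← fHom_ker p hp2,
    Nat.card_congr (QuotientGroup.quotientKerEquivOfSurjective _ hsurj).toEquiv]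
  rw [Nat.card_eq_fintype_card]
  rfl
end
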